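/- Let X be a diametrically regular metric space, μ a measure over X, α > 0, c_α > 0, and A ⊆ X. If (ℱ_b)_{μ,ζ_{b,α}} covers A finely, then the spherical Federer density 𝔰^α(μ,·): A → [0,+∞] is Borel measurable with respect to the subspace topology of A. -/

import Mathlib

open MeasureTheory Set ENNReal Filter

noncomputable section

/-- The subclass `𝒮_{μ,ζ}` of a class of sets `𝒮`, obtained by removing the sets `S`
where `ζ S = μ S = 0` or `ζ S = μ S = +∞`. -/
def goodClass {X : Type*} [MetricSpace X] (μ : OuterMeasure X) (𝒮 : Set (Set X))
    (ζ : Set X → ℝ≥0∞) : Set (Set X) :=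
  {S ∈ 𝒮 | ¬ ((ζ S = 0 ∧ μ S = 0) ∨ (ζ S = ⊤ ∧ μ S = ⊤))}

/-- The quotient function `Q_{μ,ζ}`: equals `+∞` if `ζ S = 0`, `μ S / ζ S` if
`0 < ζ S < +∞`, and `0` if `ζ S = +∞` (note `a / ⊤ = 0` in `ℝ≥0∞`). -/
def fedQuot {X : Type*} [MetricSpace X] (μ : OuterMeasure X) (ζ : Set X → ℝ≥0∞)
    (S : Set X) : ℝ≥0∞ :=
  if ζ S = 0 then ⊤ else μ S / ζ S

/-- A family of sets `ℱ` covers `A` finely: for every `a ∈ A` and every `ε > 0` there is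
`S ∈ ℱ` containing `a` with `diam S < ε`. -/
def CoversFinely {X : Type*} [MetricSpace X] (ℱ : Set (Set X)) (A : Set X) : Prop :=
  ∀ a ∈ A, ∀ ε : ℝ≥0∞, 0 < ε → ∃ S ∈ ℱ, a ∈ S ∧ EMetric.diam S < ε

/-- The Federer density `F^ζ(μ,x)`. -/
def federerDensity {X : Type*} [MetricSpace X] (μ : OuterMeasure X) (𝒮 : Set (Set X))
    (ζ : Set X → ℝ≥0∞) (x : X) : ℝ≥0∞ :=
  ⨅ (ε : ℝ≥0∞) (_ : 0 < ε),
    ⨆ (S : Set X) (_ : S ∈ goodClass μ 𝒮 ζ) (_ : x ∈ S) (_ : EMetric.diam S < ε),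
      fedQuot μ ζ S

/-- The size-`δ` premeasure `φ_{ζ,δ}` of the Carathéodory construction. -/
def preCarMeasure {X : Type*} [MetricSpace X] (𝒮 : Set (Set X)) (ζ : Set X → ℝ≥0∞)
    (δ : ℝ≥0∞) (R : Set X) : ℝ≥0∞ :=
  ⨅ (E : ℕ → Set X) (_ : ∀ j, E j ∈ 𝒮) (_ : ∀ j, EMetric.diam (E j) ≤ δ)
    (_ : R ⊆ ⋃ j, E j), ∑' j, ζ (E j)

/-- The Carathéodory measure `ψ_ζ`. -/
def carMeasure {X : Type*} [MetricSpace X] (𝒮 : Set (Set X)) (ζ : Set X → ℝ≥0∞)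
    (R : Set X) : ℝ≥0∞ :=
  ⨆ (δ : ℝ≥0∞) (_ : 0 < δ), preCarMeasure 𝒮 ζ δ R

/-- The `τ`-enlargement `Ŝ` of a set `S`. -/
def enlargement {X : Type*} [MetricSpace X] (μ : OuterMeasure X) (𝒮 : Set (Set X))
    (ζ : Set X → ℝ≥0∞) (τ : ℝ) (S : Set X) : Set X :=
  ⋃₀ {T ∈ goodClass μ 𝒮 ζ | (T ∩ S).Nonempty ∧
      EMetric.diam T ≤ ENNReal.ofReal τ * EMetric.diam S}

/-- `μ` is a regular (outer) measure: every set is contained in a `μ`-measurable set of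
the same measure. -/
def IsRegularOM {X : Type*} [MetricSpace X] (μ : OuterMeasure X) : Prop :=
  ∀ E : Set X, ∃ F : Set X, E ⊆ F ∧ μ.IsCaratheodory F ∧ μ F = μ E

/-- `μ` is a Borel (outer) measure: every Borel set is `μ`-measurable. -/
def IsBorelOM {X : Type*} [MetricSpace X] (μ : OuterMeasure X) : Prop :=
  ∀ E : Set X, MeasurableSet[borel X] E → μ.IsCaratheodory E

/-- `μ` is a Borel regular (outer) measure. -/
def IsBorelRegularOM {X : Type*} [MetricSpace X] (μ : OuterMeasure X) : Prop :=
  IsBorelOM μ ∧ ∀ E : Set X, ∃ B : Set X, E ⊆ B ∧ MeasurableSet[borel X] B ∧ μ B = μ E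

/-- Carathéodory measurability of a set with respect to a set function. -/
def SetFnCaratheodory {X : Type*} (ν : Set X → ℝ≥0∞) (E : Set X) : Prop :=
  ∀ T : Set X, ν T = ν (T ∩ E) + ν (T \ E)

/-- `μ⌊A << ν⌊A`: absolute continuity of the restrictions to `A`. -/
def AbsContOn {X : Type*} [MetricSpace X] (μ : OuterMeasure X) (ν : Set X → ℝ≥0∞)
    (A : Set X) : Prop :=
  ∀ E : Set X, ν (A ∩ E) = 0 → μ (A ∩ E) = 0

/-- `S` is σ-finite with respect to the set function `ν`. -/
def SigmaFiniteWrt {X : Type*} (ν : Set X → ℝ≥0∞) (S : Set X) : Prop :=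
  ∃ E : ℕ → Set X, S ⊆ ⋃ j, E j ∧ ∀ j, ν (E j) < ⊤

/-- The integral `∫_B f dν` with respect to an (outer) set function `ν`,
via the layer-cake formula. -/
def omIntegral {X : Type*} (ν : Set X → ℝ≥0∞) (B : Set X) (f : X → ℝ≥0∞) : ℝ≥0∞ :=
  ∫⁻ t in Set.Ioi (0 : ℝ), ν {x ∈ B | ENNReal.ofReal t < f x}

/-- The enlargement condition: there are `c ≥ 1` and `η > 0` such that every
`S ∈ 𝒮_{μ,ζ}` admits `S̃ ∈ 𝒮` with `Ŝ ⊆ S̃`, `diam S̃ ≤ c diam S` and `ζ S̃ ≤ η ζ S`. -/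
def EnlCondition {X : Type*} [MetricSpace X] (μ : OuterMeasure X) (𝒮 : Set (Set X))
    (ζ : Set X → ℝ≥0∞) (τ : ℝ) : Prop :=
  ∃ c : ℝ, 1 ≤ c ∧ ∃ η : ℝ, 0 < η ∧ ∀ S ∈ goodClass μ 𝒮 ζ, ∃ S' ∈ 𝒮,
    enlargement μ 𝒮 ζ τ S ⊆ S' ∧ EMetric.diam S' ≤ ENNReal.ofReal c * EMetric.diam S ∧
      ζ S' ≤ ENNReal.ofReal η * ζ S

/-- The gauge `ζ_α(S) = c_α (diam S)^α`. -/
def zetaDiam {X : Type*} [MetricSpace X] (cα α : ℝ) (S : Set X) : ℝ≥0∞ :=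
  ENNReal.ofReal cα * EMetric.diam S ^ α

/-- The family `ℱ` of closed subsets of `X`. -/
def closedSets (X : Type*) [MetricSpace X] : Set (Set X) := {S | IsClosed S}

/-- The family `ℱ_b` of closed balls of `X` (with positive radius). -/
def closedBalls (X : Type*) [MetricSpace X] : Set (Set X) :=
  {S | ∃ (y : X) (r : ℝ), 0 < r ∧ S = Metric.closedBall y r}

/-- The family `ℱ_o` of open balls of `X` (with positive radius). -/
def openBalls (X : Type*) [MetricSpace X] : Set (Set X) :=
  {S | ∃ (y : X) (r : ℝ), 0 < r ∧ S = Metric.ball y r}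

/-- The `α`-dimensional Hausdorff measure `ℋ^α` with normalizing constant `c_α`. -/
def hausdorffMeasureC (X : Type*) [MetricSpace X] (cα α : ℝ) : Set X → ℝ≥0∞ :=
  carMeasure (closedSets X) (zetaDiam cα α)

/-- The `α`-dimensional spherical Hausdorff measure `𝒮^α` with constant `c_α`. -/
def sphericalMeasureC (X : Type*) [MetricSpace X] (cα α : ℝ) : Set X → ℝ≥0∞ :=
  carMeasure (closedBalls X) (zetaDiam cα α)

/-- `X` is diametrically regular. -/
def DiametricallyRegular (X : Type*) [MetricSpace X] : Prop :=
  ∀ x : X, ∃ R > (0 : ℝ), ∃ δ > (0 : ℝ), ∀ y ∈ Metric.ball x R,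
    ContinuousOn (fun r : ℝ => EMetric.diam (Metric.ball y r)) (Set.Ioo 0 δ)

end


noncomputable section AuxStmt13

open Metric
open scoped Classical

variable {X : Type*} [MetricSpace X]

/-- Auxiliary: the sup at scale `ε` appearing in the Federer density. -/
def gsup (μ : MeasureTheory.OuterMeasure X) (cα α : ℝ) (ε : ℝ≥0∞) (x : X) : ℝ≥0∞ :=
  ⨆ (S : Set X) (_ : S ∈ goodClass μ (closedBalls X) (zetaDiam cα α)) (_ : x ∈ S)
    (_ : EMetric.diam S < ε), fedQuot μ (zetaDiam cα α) S

lemma federerDensity_eq_gsup (μ : MeasureTheory.OuterMeasure X) (cα α : ℝ) (x : X) :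
    federerDensity μ (closedBalls X) (zetaDiam cα α) x
      = ⨅ (ε : ℝ≥0∞) (_ : 0 < ε), gsup μ cα α ε x := rfl

lemma gsup_mono (μ : MeasureTheory.OuterMeasure X) (cα α : ℝ) {ε ε' : ℝ≥0∞} (h : ε ≤ ε')
    (x : X) : gsup μ cα α ε x ≤ gsup μ cα α ε' x := by
  refine iSup_mono fun S => iSup_mono fun hS => iSup_mono fun hx => ?_
  exact iSup_le fun hd =>
    le_iSup (fun _ : EMetric.diam S < ε' => fedQuot μ (zetaDiam cα α) S) (hd.trans_le h)

/-- Auxiliary continuity lemma: slightly enlarged closed balls have almost the same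
diameter, thanks to diametric regularity. -/
lemma diam_enlarge {y : X} {δ r : ℝ}
    (hcont : ContinuousOn (fun s : ℝ => EMetric.diam (Metric.ball y s)) (Set.Ioo 0 δ))
    (hr : r ∈ Set.Ioo 0 δ) {κ : ℝ≥0∞}
    (hκ : EMetric.diam (Metric.closedBall y r) < κ) :
    ∃ u, r < u ∧ EMetric.diam (Metric.closedBall y u) < κ := by
  have hca : ContinuousAt (fun s : ℝ => EMetric.diam (Metric.ball y s)) r :=
    (hcont r hr).continuousAt (isOpen_Ioo.mem_nhds hr)
  have hfr : EMetric.diam (Metric.ball y r) < κ :=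
    lt_of_le_of_lt (EMetric.diam_mono Metric.ball_subset_closedBall) hκ
  have hev : ∀ᶠ s in nhds r, EMetric.diam (Metric.ball y s) < κ :=
    Filter.Tendsto.eventually_lt_const hfr hca
  rw [Metric.eventually_nhds_iff] at hev
  obtain ⟨a, ha, hev⟩ := hev
  refine ⟨r + a / 4, by linarith, ?_⟩
  have hsub : Metric.closedBall y (r + a / 4) ⊆ Metric.ball y (r + a / 2) :=
    Metric.closedBall_subset_ball (by linarith)
  refine lt_of_le_of_lt (EMetric.diam_mono hsub) (hev ?_)
  rw [Real.dist_eq, show r + a / 2 - r = a / 2 by ring, abs_of_pos (by linarith)]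
  linarith

/-- The key local lower semicontinuity lemma. -/
lemma gsup_lsc (μ : MeasureTheory.OuterMeasure X) (α cα : ℝ) (hα : 0 < α) (hc : 0 < cα)
    (hX : DiametricallyRegular X) (x0 : X) :
    ∃ ρ0 > (0 : ℝ), ∃ e0 > (0 : ℝ), ∀ e : ℝ, 0 < e → e ≤ e0 → ∀ t : ℝ≥0∞,
      ∀ x ∈ Metric.ball x0 ρ0, t < gsup μ cα α (ENNReal.ofReal e) x →
      ∃ ρ > (0 : ℝ), ∀ x' ∈ Metric.ball x ρ, t < gsup μ cα α (ENNReal.ofReal e) x' := by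
  obtain ⟨R, hR, δ, hδ, hcont⟩ := hX x0
  refine ⟨R / 2, by linarith, min 1 (min (δ / 2) (R / 2)), by positivity, ?_⟩
  intro e he hee t x hx ht
  simp only [gsup, lt_iSup_iff] at ht
  obtain ⟨S, hSgood, hxS, hSdiam, htQ⟩ := ht
  obtain ⟨hSball, hSbad⟩ := hSgood
  obtain ⟨y, r, hr, rfl⟩ := hSball
  have heδ : e ≤ δ / 2 := hee.trans ((min_le_right _ _).trans (min_le_left _ _))
  have heR : e ≤ R / 2 := hee.trans ((min_le_right _ _).trans (min_le_right _ _))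
  have hy : y ∈ Metric.closedBall y r := Metric.mem_closedBall_self hr.le
  have hdl : ∀ z ∈ Metric.closedBall y r, dist z y < e := fun z hz =>
    edist_lt_ofReal.mp (lt_of_le_of_lt (EMetric.edist_le_diam_of_mem hz hy) hSdiam)
  set rr := min r e with hrrdef
  have hrr0 : 0 < rr := lt_min hr he
  have hrre : rr ≤ e := min_le_right _ _
  have Seq : Metric.closedBall y r = Metric.closedBall y rr := by
    apply subset_antisymm
    · intro z hz
      exact Metric.mem_closedBall.mpr (le_min (Metric.mem_closedBall.mp hz) (hdl z hz).le)
    · exact Metric.closedBall_subset_closedBall (min_le_left _ _)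
  rw [Seq] at hxS hSdiam htQ hSbad
  have hyx0 : y ∈ Metric.ball x0 R := by
    rw [Metric.mem_ball]
    have h1 : dist x y ≤ rr := Metric.mem_closedBall.mp hxS
    have h2 : dist x x0 < R / 2 := Metric.mem_ball.mp hx
    have h3 : dist y x ≤ rr := by rwa [dist_comm]
    calc dist y x0 ≤ dist y x + dist x x0 := dist_triangle _ _ _
      _ < R := by linarith
  have hrrδ : rr ∈ Set.Ioo 0 δ := ⟨hrr0, by linarith⟩
  set d := EMetric.diam (Metric.closedBall y rr) with hddef
  have hde : d < ENNReal.ofReal e := hSdiam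
  have hdtop : d ≠ ⊤ := (hde.trans ENNReal.ofReal_lt_top).ne
  have hc0 : ENNReal.ofReal cα ≠ 0 := (ENNReal.ofReal_pos.mpr hc).ne'
  have hctop : ENNReal.ofReal cα ≠ ⊤ := ENNReal.ofReal_ne_top
  have hζeq : zetaDiam cα α (Metric.closedBall y rr) = ENNReal.ofReal cα * d ^ α := rfl
  set m := μ (Metric.closedBall y rr) with hmdef
  have httop : t ≠ ⊤ := (htQ.trans_le le_top).ne
  have hζtop : zetaDiam cα α (Metric.closedBall y rr) ≠ ⊤ := by
    rw [hζeq]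
    exact ENNReal.mul_ne_top hctop (ENNReal.rpow_lt_top_of_nonneg hα.le hdtop).ne
  have hm0 : m ≠ 0 := by
    intro h0
    by_cases hz : zetaDiam cα α (Metric.closedBall y rr) = 0
    · exact hSbad (Or.inl ⟨hz, h0⟩)
    · rw [fedQuot, if_neg hz, ← hmdef, h0, ENNReal.zero_div] at htQ
      exact not_lt_bot htQ
  set z := t * ENNReal.ofReal cα with hzdef
  have hztop : z ≠ ⊤ := ENNReal.mul_ne_top httop hctop
  have hzd : z * d ^ α < m := by
    by_cases hz0 : zetaDiam cα α (Metric.closedBall y rr) = 0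
    · have hda : d ^ α = 0 := by
        rcases mul_eq_zero.mp (hζeq ▸ hz0) with h | h
        · exact absurd h hc0
        · exact h
      rw [hda, mul_zero]
      exact pos_iff_ne_zero.mpr hm0
    · rw [fedQuot, if_neg hz0, ← hmdef] at htQ
      have h1 : t * zetaDiam cα α (Metric.closedBall y rr) < m :=
        (ENNReal.lt_div_iff_mul_lt (Or.inl hz0) (Or.inl hζtop)).mp htQ
      calc z * d ^ α = t * (ENNReal.ofReal cα * d ^ α) := by rw [hzdef]; ring
        _ < m := by rw [← hζeq]; exact h1
  set q := m / z with hqdef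
  have hdq : d ^ α < q := by
    by_cases hz0 : z = 0
    · rw [hqdef, hz0, ENNReal.div_zero hm0]
      exact ENNReal.rpow_lt_top_of_nonneg hα.le hdtop
    · exact (ENNReal.lt_div_iff_mul_lt (Or.inl hz0) (Or.inl hztop)).mpr
        (by rwa [mul_comm] at hzd)
  set b := q ^ (1 / α) with hbdef
  have hdb : d < b := by
    have h1 : d = (d ^ α) ^ (1 / α) := by
      rw [← ENNReal.rpow_mul, mul_one_div, div_self hα.ne', ENNReal.rpow_one]
    rw [h1, hbdef]
    exact ENNReal.rpow_lt_rpow hdq (by positivity)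
  set b' := min b (2 * ENNReal.ofReal e) with hb'def
  have hb'top : b' ≠ ⊤ := ((min_le_right _ _).trans_lt (by finiteness)).ne
  have hdb' : d < b' :=
    lt_min hdb (hde.trans_le (le_mul_of_one_le_left zero_le one_le_two))
  set κ := min (ENNReal.ofReal e) ((d + b') / 2) with hκdef
  have hκe : κ ≤ ENNReal.ofReal e := min_le_left _ _
  have hκtop : κ ≠ ⊤ := (hκe.trans_lt ENNReal.ofReal_lt_top).ne
  have h2ne : (2 : ℝ≥0∞) ≠ 0 := by norm_num
  have h2top : (2 : ℝ≥0∞) ≠ ⊤ := by finiteness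
  have hdκ : d < κ := by
    refine lt_min hde ?_
    rw [ENNReal.lt_div_iff_mul_lt (Or.inl h2ne) (Or.inl h2top), mul_two]
    exact ENNReal.add_lt_add_left hdtop hdb'
  have hκb' : κ < b' := by
    refine (min_le_right _ _).trans_lt ?_
    rw [ENNReal.div_lt_iff (Or.inl h2ne) (Or.inl h2top), mul_two]
    calc d + b' = b' + d := add_comm _ _
      _ < b' + b' := ENNReal.add_lt_add_left hb'top hdb'
  have hκq : κ ^ α < q := by
    have hκb : κ < b := hκb'.trans_le (min_le_left _ _)
    have h2 : κ ^ α < b ^ α := ENNReal.rpow_lt_rpow hκb hα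
    have h3 : b ^ α = q := by
      rw [hbdef, ← ENNReal.rpow_mul, one_div, inv_mul_cancel₀ hα.ne', ENNReal.rpow_one]
    rwa [h3] at h2
  obtain ⟨u, hru, hdu⟩ := diam_enlarge (hcont y hyx0) hrrδ (hddef ▸ hdκ)
  refine ⟨u - rr, by linarith, ?_⟩
  intro x' hx'
  have hx'y : x' ∈ Metric.closedBall y u := by
    rw [Metric.mem_closedBall]
    have h1 : dist x' x < u - rr := Metric.mem_ball.mp hx'
    have h2 : dist x y ≤ rr := Metric.mem_closedBall.mp hxS
    calc dist x' y ≤ dist x' x + dist x y := dist_triangle _ _ _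
      _ ≤ u := by linarith
  have hS'ball : Metric.closedBall y u ∈ closedBalls X := ⟨y, u, hrr0.trans hru, rfl⟩
  have hdS' : EMetric.diam (Metric.closedBall y u) < κ := hdu
  have hdS'e : EMetric.diam (Metric.closedBall y u) < ENNReal.ofReal e := hdS'.trans_le hκe
  have hmS' : m ≤ μ (Metric.closedBall y u) := by
    rw [hmdef]
    exact MeasureTheory.measure_mono (Metric.closedBall_subset_closedBall hru.le)
  have hμS'0 : μ (Metric.closedBall y u) ≠ 0 := fun h0 =>
    hm0 (le_antisymm (h0 ▸ hmS') zero_le)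
  have hζ'eq : zetaDiam cα α (Metric.closedBall y u)
      = ENNReal.ofReal cα * EMetric.diam (Metric.closedBall y u) ^ α := rfl
  have hζS'top : zetaDiam cα α (Metric.closedBall y u) ≠ ⊤ := by
    rw [hζ'eq]
    exact ENNReal.mul_ne_top hctop (ENNReal.rpow_lt_top_of_nonneg hα.le
      (hdS'e.trans ENNReal.ofReal_lt_top).ne).ne
  have hS'good : Metric.closedBall y u ∈ goodClass μ (closedBalls X) (zetaDiam cα α) := by
    refine ⟨hS'ball, ?_⟩
    rintro (⟨-, h2⟩ | ⟨h1, -⟩)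
    · exact hμS'0 h2
    · exact hζS'top h1
  have hzκ : z * κ ^ α < m := by
    by_cases hz0 : z = 0
    · rw [hz0, zero_mul]
      exact pos_iff_ne_zero.mpr hm0
    · have h1 := ENNReal.mul_lt_of_lt_div hκq
      rwa [mul_comm] at h1
  have hQ' : t < fedQuot μ (zetaDiam cα α) (Metric.closedBall y u) := by
    rw [fedQuot]
    by_cases hζ0 : zetaDiam cα α (Metric.closedBall y u) = 0
    · rw [if_pos hζ0]
      exact httop.lt_top
    · rw [if_neg hζ0, ENNReal.lt_div_iff_mul_lt (Or.inl hζ0) (Or.inl hζS'top)]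
      calc t * zetaDiam cα α (Metric.closedBall y u)
          = z * EMetric.diam (Metric.closedBall y u) ^ α := by rw [hζ'eq, hzdef]; ring
        _ ≤ z * κ ^ α := mul_le_mul_right (ENNReal.rpow_le_rpow hdS'.le hα.le) z
        _ < m := hzκ
        _ ≤ μ (Metric.closedBall y u) := hmS'
  simp only [gsup, lt_iSup_iff]
  exact ⟨Metric.closedBall y u, hS'good, hx'y, hdS'e, hQ'⟩

/-- The sequence of scales `1/(n+1)`. -/
def enSeq (n : ℕ) : ℝ := 1 / (n + 1)

lemma enSeq_pos (n : ℕ) : 0 < enSeq n := by unfold enSeq; positivity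

lemma enSeq_anti {n m : ℕ} (h : n ≤ m) : enSeq m ≤ enSeq n := by
  unfold enSeq
  apply one_div_le_one_div_of_le (by positivity)
  have : (n : ℝ) ≤ m := Nat.cast_le.mpr h
  linarith

/-- The open set of points where scale `enSeq n` is admissible. -/
def Uaux (ρ0 e0 : X → ℝ) (n : ℕ) : Set X :=
  ⋃ (x0 : X) (_ : enSeq n ≤ e0 x0), Metric.ball x0 (ρ0 x0)

lemma Uaux_open (ρ0 e0 : X → ℝ) (n : ℕ) : IsOpen (Uaux ρ0 e0 n) :=
  isOpen_iUnion fun _ => isOpen_iUnion fun _ => Metric.isOpen_ball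

/-- Modified sup-functions, forced to `⊤` outside `Uaux`. -/
def φaux (μ : MeasureTheory.OuterMeasure X) (cα α : ℝ) (ρ0 e0 : X → ℝ) (n : ℕ)
    (x : X) : ℝ≥0∞ :=
  if x ∈ Uaux ρ0 e0 n then gsup μ cα α (ENNReal.ofReal (enSeq n)) x else ⊤

end AuxStmt13

/-- the spherical Federer density `𝔰^α(μ,·)` is Borel with respect to the
subspace topology of `A`. -/
theorem stmt13 {X : Type*} [MetricSpace X] (μ : MeasureTheory.OuterMeasure X)
    (α cα : ℝ) (hα : 0 < α) (hc : 0 < cα) (A : Set X)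
    (hX : DiametricallyRegular X)
    (h : CoversFinely (goodClass μ (closedBalls X) (zetaDiam cα α)) A) :
    @Measurable A ℝ≥0∞ (borel A) ENNReal.measurableSpace
      (fun x : A => federerDensity μ (closedBalls X) (zetaDiam cα α) (x : X)) := by
  classical
  choose ρ0 hρ0 e0 he0 hP using gsup_lsc μ α cα hα hc hX
  letI : MeasurableSpace X := borel X
  haveI : BorelSpace X := ⟨rfl⟩
  have hφ : ∀ n, Measurable (φaux μ cα α ρ0 e0 n) := by
    intro n
    apply measurable_of_Ioi
    intro t
    by_cases ht : t = ⊤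
    · have hempty : φaux μ cα α ρ0 e0 n ⁻¹' Set.Ioi t = ∅ := by
        ext w
        simp [ht]
      rw [hempty]
      exact MeasurableSet.empty
    · have hW : IsOpen (Uaux ρ0 e0 n ∩
          {x | t < gsup μ cα α (ENNReal.ofReal (enSeq n)) x}) := by
        rw [Metric.isOpen_iff]
        rintro x ⟨hxU, hxG⟩
        obtain ⟨x0, hmem⟩ := Set.mem_iUnion.mp hxU
        obtain ⟨hne, hxball⟩ := Set.mem_iUnion.mp hmem
        obtain ⟨ρ, hρ, hball⟩ := hP x0 (enSeq n) (enSeq_pos n) hne t x hxball hxG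
        have hx0 : dist x x0 < ρ0 x0 := Metric.mem_ball.mp hxball
        refine ⟨min ρ (ρ0 x0 - dist x x0), lt_min hρ (by linarith), ?_⟩
        intro w hw
        have hw' : dist w x < min ρ (ρ0 x0 - dist x x0) := Metric.mem_ball.mp hw
        have hw1 : w ∈ Metric.ball x ρ :=
          Metric.mem_ball.mpr (hw'.trans_le (min_le_left _ _))
        have hw2 : w ∈ Metric.ball x0 (ρ0 x0) := by
          rw [Metric.mem_ball]
          have h3 : dist w x < ρ0 x0 - dist x x0 := hw'.trans_le (min_le_right _ _)
          calc dist w x0 ≤ dist w x + dist x x0 := dist_triangle _ _ _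
            _ < ρ0 x0 := by linarith
        exact ⟨Set.mem_iUnion.mpr ⟨x0, Set.mem_iUnion.mpr ⟨hne, hw2⟩⟩, hball w hw1⟩
      have hset : φaux μ cα α ρ0 e0 n ⁻¹' Set.Ioi t = (Uaux ρ0 e0 n)ᶜ ∪
          (Uaux ρ0 e0 n ∩ {x | t < gsup μ cα α (ENNReal.ofReal (enSeq n)) x}) := by
        ext w
        by_cases hw : w ∈ Uaux ρ0 e0 n
        · simp [φaux, hw, Set.mem_Ioi]
        · simp [φaux, hw, Set.mem_Ioi, lt_top_iff_ne_top, ht]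
      rw [hset]
      exact ((Uaux_open ρ0 e0 n).measurableSet.compl).union hW.measurableSet
  have hkey : (fun x : X => federerDensity μ (closedBalls X) (zetaDiam cα α) x)
      = fun x => ⨅ n, φaux μ cα α ρ0 e0 n x := by
    funext x
    apply le_antisymm
    · refine le_iInf fun n => ?_
      by_cases hx : x ∈ Uaux ρ0 e0 n
      · have h1 : federerDensity μ (closedBalls X) (zetaDiam cα α) x
            ≤ gsup μ cα α (ENNReal.ofReal (enSeq n)) x := by
          rw [federerDensity_eq_gsup]
          exact iInf_le_of_le (ENNReal.ofReal (enSeq n))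
            (iInf_le_of_le (ENNReal.ofReal_pos.mpr (enSeq_pos n)) le_rfl)
        calc federerDensity μ (closedBalls X) (zetaDiam cα α) x
            ≤ gsup μ cα α (ENNReal.ofReal (enSeq n)) x := h1
          _ = φaux μ cα α ρ0 e0 n x := by rw [φaux, if_pos hx]
      · rw [φaux, if_neg hx]
        exact le_top
    · rw [federerDensity_eq_gsup]
      refine le_iInf fun ε => le_iInf fun hε => ?_
      obtain ⟨n₁, hn₁⟩ := exists_nat_one_div_lt (he0 x)
      obtain ⟨n₂, hn₂⟩ : ∃ k : ℕ, ENNReal.ofReal (enSeq k) ≤ ε := by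
        by_cases hεtop : ε = ⊤
        · exact ⟨0, hεtop ▸ le_top⟩
        · obtain ⟨k, hk⟩ := exists_nat_one_div_lt (ENNReal.toReal_pos hε.ne' hεtop)
          refine ⟨k, ?_⟩
          rw [← ENNReal.ofReal_toReal hεtop]
          exact ENNReal.ofReal_le_ofReal hk.le
      set n := max n₁ n₂ with hndef
      have hne : enSeq n ≤ e0 x := (enSeq_anti (le_max_left n₁ n₂)).trans hn₁.le
      have hεn : ENNReal.ofReal (enSeq n) ≤ ε :=
        (ENNReal.ofReal_le_ofReal (enSeq_anti (le_max_right n₁ n₂))).trans hn₂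
      have hxU : x ∈ Uaux ρ0 e0 n :=
        Set.mem_iUnion.mpr ⟨x, Set.mem_iUnion.mpr ⟨hne, Metric.mem_ball_self (hρ0 x)⟩⟩
      calc (⨅ k, φaux μ cα α ρ0 e0 k x) ≤ φaux μ cα α ρ0 e0 n x := iInf_le _ n
        _ = gsup μ cα α (ENNReal.ofReal (enSeq n)) x := by rw [φaux, if_pos hxU]
        _ ≤ gsup μ cα α ε x := gsup_mono μ cα α hεn x
  have hmeasX : Measurable fun x : X =>
      federerDensity μ (closedBalls X) (zetaDiam cα α) x := by
    rw [hkey]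
    exact Measurable.iInf hφ
  letI : MeasurableSpace A := borel A
  haveI : BorelSpace A := ⟨rfl⟩
  exact hmeasX.comp continuous_subtype_val.measurable
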